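/- The map φ on permutations of [n] defined by φ(σ) = R ∘ σ⁻¹ ∘ R, where R(i) = n+1-i, is an involution satisfying: σ(n) = j iff φ(σ)(n+1-j) = 1; j ∈ RLMi(σ) iff n+1-j ∈ RLMv(φ(σ)); j ∈ EXCi(σ) iff n+1-j ∈ EXCv(φ(σ)); j is a fixed point of σ iff n+1-j is a fixed point of φ(σ); and cyc(σ) = cyc(φ(σ)). -/

import Mathlib

open Finset

/-- Number of cycles of a permutation (counting fixed points as 1-cycles). -/
def cyc {n : ℕ} (σ : Equiv.Perm (Fin n)) : ℕ :=
  σ.cycleType.card + (Finset.univ.filter fun i => σ i = i).card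

/-- Set of excedance indices of a permutation. -/
def excIdx {n : ℕ} (σ : Equiv.Perm (Fin n)) : Finset (Fin n) :=
  Finset.univ.filter fun i => i < σ i

/-- Set of excedance values of a permutation: values v with σ⁻¹ v < v. -/
def excVal {n : ℕ} (σ : Equiv.Perm (Fin n)) : Finset (Fin n) :=
  Finset.univ.filter fun v => σ.symm v < v

/-- Set of right-to-left minimum indices. -/
def rlmIdx {n : ℕ} (σ : Equiv.Perm (Fin n)) : Finset (Fin n) :=
  Finset.univ.filter fun i => ∀ k, i < k → σ i < σ k

/-- Set of right-to-left minimum values. -/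
def rlmVal {n : ℕ} (σ : Equiv.Perm (Fin n)) : Finset (Fin n) :=
  (rlmIdx σ).image σ

/-- The flipping map φ(σ) = R ∘ σ⁻¹ ∘ R, where `Fin.revPerm` is the
0-based analogue of R(i) = n+1-i. -/
def flipPerm {n : ℕ} (σ : Equiv.Perm (Fin n)) : Equiv.Perm (Fin n) :=
  Fin.revPerm * σ⁻¹ * Fin.revPerm

lemma flipPerm_apply {n : ℕ} (σ : Equiv.Perm (Fin n)) (i : Fin n) :
    flipPerm σ i = (σ⁻¹ i.rev).rev := by
  simp [flipPerm, Equiv.Perm.mul_apply]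

lemma flipPerm_apply_rev {n : ℕ} (σ : Equiv.Perm (Fin n)) (i : Fin n) :
    flipPerm σ i.rev = (σ⁻¹ i).rev := by
  simp [flipPerm_apply]

/-- `Fin n` represents `[n]` 0-based; `j.rev` is `n+1-j` in 1-based terms,
`⟨n-1⟩` is `n` and `⟨0⟩` is `1`. -/
theorem stmt7 (n : ℕ) (hn : 1 ≤ n) (σ : Equiv.Perm (Fin n)) :
    flipPerm (flipPerm σ) = σ ∧
    (∀ j : Fin n, σ ⟨n - 1, by omega⟩ = j ↔ flipPerm σ j.rev = ⟨0, by omega⟩) ∧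
    (∀ j : Fin n, j ∈ rlmIdx σ ↔ j.rev ∈ rlmVal (flipPerm σ)) ∧
    (∀ j : Fin n, j ∈ excIdx σ ↔ j.rev ∈ excVal (flipPerm σ)) ∧
    (∀ j : Fin n, σ j = j ↔ flipPerm σ j.rev = j.rev) ∧
    cyc σ = cyc (flipPerm σ) := by
  have hrev0 : (Fin.rev ⟨0, by omega⟩ : Fin n) = ⟨n - 1, by omega⟩ := by
    ext; simp [Fin.rev]
  refine ⟨?_, ?_, ?_, ?_, ?_, ?_⟩
  · ext i
    simp [flipPerm, Equiv.Perm.mul_apply]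
  · intro j
    rw [flipPerm_apply_rev]
    rw [show (⟨0, by omega⟩ : Fin n) = Fin.rev ⟨n - 1, by omega⟩ by
      rw [← hrev0, Fin.rev_rev]]
    rw [Fin.rev_inj]
    constructor
    · intro h; rw [← h]; simp
    · intro h; rw [← h]; simp
  · intro j
    simp only [rlmIdx, rlmVal, mem_image, mem_filter, mem_univ, true_and]
    constructor
    · intro h
      refine ⟨(σ j).rev, ?_, by rw [flipPerm_apply_rev]; simp⟩
      intro k hk
      rw [flipPerm_apply_rev, flipPerm_apply]
      rw [Fin.rev_lt_rev]
      simp only [Equiv.Perm.inv_def, Equiv.symm_apply_apply]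
      rw [← Fin.rev_rev k, Fin.rev_lt_rev] at hk
      -- hk : k.rev < σ j ; goal : σ⁻¹ k.rev < j
      by_contra hc
      push_neg at hc
      rcases lt_or_eq_of_le hc with hlt | heq
      · have := h _ hlt
        simp only [Equiv.Perm.inv_def, Equiv.apply_symm_apply] at this
        exact lt_asymm hk this
      · rw [heq] at hk
        simp at hk
    · rintro ⟨i, hi, hij⟩
      intro k hk
      -- hij : flipPerm σ i = j.rev, so i = (flipPerm σ)⁻¹ j.rev = (σ j).rev
      have hi' : i = (σ j).rev := by
        have : flipPerm σ ((σ j).rev) = j.rev := by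
          rw [flipPerm_apply_rev]; simp
        exact (flipPerm σ).injective (by rw [hij, this])
      subst hi'
      by_contra hc
      push_neg at hc
      have hne : σ k ≠ σ j := fun h => absurd (σ.injective h) (by omega)
      have hlt : σ k < σ j := lt_of_le_of_ne hc hne
      have := hi (σ k).rev (by rw [Fin.rev_lt_rev]; exact hlt)
      rw [hij, flipPerm_apply_rev] at this
      simp only [Equiv.Perm.inv_def, Equiv.symm_apply_apply] at this
      rw [Fin.rev_lt_rev] at this
      omega
  · intro j
    simp only [excIdx, excVal, mem_filter, mem_univ, true_and]
    have : (flipPerm σ).symm j.rev = (σ j).rev := by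
      apply (flipPerm σ).injective
      rw [Equiv.apply_symm_apply, flipPerm_apply_rev]
      simp
    rw [this, Fin.rev_lt_rev]
  · intro j
    rw [flipPerm_apply_rev, Fin.rev_inj]
    constructor
    · intro h; conv_lhs => rw [← h]
      simp
    · intro h; conv_lhs => rw [← h]
      simp
  · unfold cyc
    congr 1
    · have : flipPerm σ = Fin.revPerm * σ⁻¹ * Fin.revPerm⁻¹ := by
        rw [flipPerm]; congr 1
      rw [this, Equiv.Perm.cycleType_conj, Equiv.Perm.cycleType_inv]
    · apply Finset.card_bij (fun i _ => i.rev)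
      · intro a ha
        simp only [mem_filter, mem_univ, true_and] at ha ⊢
        rw [flipPerm_apply_rev, Fin.rev_inj]
        conv_lhs => rw [← ha]
        simp
      · intro a _ b _ h
        exact Fin.rev_inj.mp h
      · intro b hb
        refine ⟨b.rev, ?_, by simp⟩
        simp only [mem_filter, mem_univ, true_and] at hb ⊢
        rw [show b = Fin.rev b.rev by simp] at hb
        rw [flipPerm_apply_rev, Fin.rev_inj] at hb
        conv_lhs => rw [← hb]
        simp
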